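/- Consider V(Q,ω) = Φ(⟨I−Q,K⟩) + (m/2)ωᵀω along the noise-free filter dynamics R̂̇ = R̂Ω̂^×, mω̇ = −mΩ̂×ω + Φ'(⟨I−Q,K⟩)S_L(R̂) − Dω, with D positive definite. Then V̇ = −ωᵀDω ≤ 0. -/

import Mathlib

open Matrix

attribute [local instance] Matrix.normedAddCommGroup Matrix.normedSpace

/-- The hat map `(·)^× : ℝ³ → 𝔰𝔬(3)`; note `hat v *ᵥ w = v × w`. -/
def hat (v : Fin 3 → ℝ) : Matrix (Fin 3) (Fin 3) ℝ :=
  !![0, -v 2, v 1; v 2, 0, -v 0; -v 1, v 0, 0]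

/-- The vex map, inverse of the hat map on skew-symmetric matrices. -/
def vex (A : Matrix (Fin 3) (Fin 3) ℝ) : Fin 3 → ℝ :=
  ![A 2 1, A 0 2, A 1 0]

/-- `SO(3)`. -/
def SO3 (R : Matrix (Fin 3) (Fin 3) ℝ) : Prop :=
  Rᵀ * R = 1 ∧ R.det = 1

/-- for `V(Q,ω) = Φ(⟨I−Q,K⟩) + (m/2) ωᵀω` along the noise-free filter
dynamics `dR̂/dt = R̂ Ω̂^×`, `m ω̇ = −m Ω̂ × ω + Φ'(⟨I−Q,K⟩) S_L(R̂) − D ω` (with `Ṙ = R Ω^×`,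
`Q = R R̂ᵀ`, `ω = Ω − Ω̂`, `K = E W Eᵀ`, `L = E W Uᵀ`, `U = RᵀE`, `D` positive definite),
one has `V̇ = −ωᵀ D ω`. -/
theorem lyapunov_decrease (k : ℕ) (E : Matrix (Fin 3) (Fin k) ℝ)
    (W : Matrix (Fin k) (Fin k) ℝ) (hW : W.PosDef)
    (m : ℝ) (hm : 0 < m) (D : Matrix (Fin 3) (Fin 3) ℝ) (hD : D.PosDef)
    (Φ : ℝ → ℝ) (hΦ : Differentiable ℝ Φ)
    (R Rhat : ℝ → Matrix (Fin 3) (Fin 3) ℝ) (Ω Ωhat ω ω' : ℝ → Fin 3 → ℝ)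
    (hR : ∀ t, SO3 (R t)) (hRhat : ∀ t, SO3 (Rhat t))
    (hω : ∀ t, ω t = Ω t - Ωhat t)
    (hRdot : ∀ t, HasDerivAt R (R t * hat (Ω t)) t)
    (hRhatdot : ∀ t, HasDerivAt Rhat (Rhat t * hat (Ωhat t)) t)
    (hωdot : ∀ t, HasDerivAt ω (ω' t) t)
    (hdyn : ∀ t, m • ω' t =
      -(m • (hat (Ωhat t) *ᵥ ω t)) +
      deriv Φ (((1 - R t * (Rhat t)ᵀ)ᵀ * (E * W * Eᵀ)).trace) •
        vex ((E * W * ((R t)ᵀ * E)ᵀ)ᵀ * Rhat t - (Rhat t)ᵀ * (E * W * ((R t)ᵀ * E)ᵀ)) -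
      D *ᵥ ω t)
    (t₀ : ℝ) :
    HasDerivAt
      (fun t => Φ (((1 - R t * (Rhat t)ᵀ)ᵀ * (E * W * Eᵀ)).trace) + (m / 2) * (ω t ⬝ᵥ ω t))
      (-(ω t₀ ⬝ᵥ (D *ᵥ ω t₀))) t₀ := by
  set K : Matrix (Fin 3) (Fin 3) ℝ := E * W * Eᵀ with hKdef
  have hWs : Wᵀ = W := by
    have := hW.1.eq
    simpa using this
  have hKsym : Kᵀ = K := by
    rw [hKdef, transpose_mul, transpose_mul, transpose_transpose, hWs, Matrix.mul_assoc]
  have hL : ∀ t, E * W * ((R t)ᵀ * E)ᵀ = K * R t := by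
    intro t
    rw [transpose_mul, transpose_transpose, hKdef]
    simp only [Matrix.mul_assoc]
  have hRd : ∀ i j, HasDerivAt (fun s => R s i j) ((R t₀ * hat (Ω t₀)) i j) t₀ := by
    intro i j
    exact hasDerivAt_pi.1 (hasDerivAt_pi.1 (hRdot t₀) i) j
  have hRhd : ∀ i j, HasDerivAt (fun s => Rhat s i j) ((Rhat t₀ * hat (Ωhat t₀)) i j) t₀ := by
    intro i j
    exact hasDerivAt_pi.1 (hasDerivAt_pi.1 (hRhatdot t₀) i) j
  have hωd : ∀ i, HasDerivAt (fun s => ω s i) (ω' t₀ i) t₀ := fun i =>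
    hasDerivAt_pi.1 (hωdot t₀) i
  have hft_eq : ∀ t, ((1 - R t * (Rhat t)ᵀ)ᵀ * K).trace
      = K.trace - ∑ i, ∑ j, (∑ l, R t j l * Rhat t i l) * K j i := by
    intro t
    simp [Matrix.trace, Matrix.diag, Matrix.mul_apply, Matrix.transpose_apply,
      Matrix.sub_apply, Matrix.one_apply, Fin.sum_univ_three]
    ring
  have hftd : HasDerivAt (fun t => ((1 - R t * (Rhat t)ᵀ)ᵀ * K).trace)
      (-(∑ i, ∑ j, (∑ l, ((R t₀ * hat (Ω t₀)) j l * Rhat t₀ i l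
          + R t₀ j l * (Rhat t₀ * hat (Ωhat t₀)) i l)) * K j i)) t₀ := by
    have h1 : HasDerivAt (fun t => K.trace - ∑ i, ∑ j, (∑ l, R t j l * Rhat t i l) * K j i)
        (-(∑ i, ∑ j, (∑ l, ((R t₀ * hat (Ω t₀)) j l * Rhat t₀ i l
          + R t₀ j l * (Rhat t₀ * hat (Ωhat t₀)) i l)) * K j i)) t₀ := by
      refine HasDerivAt.const_sub _ (HasDerivAt.fun_sum fun i _ => HasDerivAt.fun_sum fun j _ => ?_)
      exact (HasDerivAt.fun_sum fun l _ => (hRd j l).mul (hRhd i l)).mul_const (K j i)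
    exact h1.congr_of_eventuallyEq (Filter.Eventually.of_forall hft_eq)
  have hΦd : HasDerivAt (fun t => Φ (((1 - R t * (Rhat t)ᵀ)ᵀ * K).trace))
      (deriv Φ (((1 - R t₀ * (Rhat t₀)ᵀ)ᵀ * K).trace) *
        (-(∑ i, ∑ j, (∑ l, ((R t₀ * hat (Ω t₀)) j l * Rhat t₀ i l
          + R t₀ j l * (Rhat t₀ * hat (Ωhat t₀)) i l)) * K j i))) t₀ :=
    (hΦ _).hasDerivAt.comp t₀ hftd
  have hgd : HasDerivAt (fun t => ω t ⬝ᵥ ω t)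
      (∑ i, (ω' t₀ i * ω t₀ i + ω t₀ i * ω' t₀ i)) t₀ :=
    HasDerivAt.fun_sum fun i _ => (hωd i).mul (hωd i)
  have key := hΦd.add (hgd.const_mul (m / 2))
  have hval : deriv Φ (((1 - R t₀ * (Rhat t₀)ᵀ)ᵀ * K).trace) *
        (-(∑ i, ∑ j, (∑ l, ((R t₀ * hat (Ω t₀)) j l * Rhat t₀ i l
          + R t₀ j l * (Rhat t₀ * hat (Ωhat t₀)) i l)) * K j i))
      + m / 2 * (∑ i, (ω' t₀ i * ω t₀ i + ω t₀ i * ω' t₀ i))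
      = -(ω t₀ ⬝ᵥ (D *ᵥ ω t₀)) := by
    have hd := hdyn t₀
    rw [hL t₀] at hd
    have hd0 := congrFun hd 0
    have hd1 := congrFun hd 1
    have hd2 := congrFun hd 2
    have hω0 := congrFun (hω t₀) 0
    have hω1 := congrFun (hω t₀) 1
    have hω2 := congrFun (hω t₀) 2
    have hK10 : K 1 0 = K 0 1 := congrFun (congrFun hKsym 0) 1
    have hK20 : K 2 0 = K 0 2 := congrFun (congrFun hKsym 0) 2
    have hK21 : K 2 1 = K 1 2 := congrFun (congrFun hKsym 1) 2
    simp only [Pi.sub_apply] at hω0 hω1 hω2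
    set_option maxHeartbeats 2000000 in
    simp only [hat, vex, Matrix.mulVec, Matrix.mul_apply, Matrix.transpose_apply,
      Matrix.sub_apply, Matrix.one_apply, dotProduct, Fin.sum_univ_three,
      Pi.smul_apply, smul_eq_mul, Pi.add_apply, Pi.neg_apply, Pi.sub_apply,
      Matrix.cons_val', Matrix.cons_val_zero, Matrix.cons_val_one, Matrix.head_cons,
      Matrix.empty_val', Matrix.cons_val_fin_one, Matrix.head_fin_const,
      Matrix.cons_val_two, Matrix.vecTail, Matrix.vecHead, Matrix.cons_val_succ,
      Fin.succ_zero_eq_one, Fin.succ_one_eq_two,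
      Matrix.of_apply, Function.comp] at hd0 hd1 hd2 ⊢
    rw [hω0, hω1, hω2] at hd0 hd1 hd2 ⊢
    rw [hK10, hK20, hK21] at hd0 hd1 hd2 ⊢
    set_option maxHeartbeats 2000000 in
    linear_combination (Ω t₀ 0 - Ωhat t₀ 0) * hd0 + (Ω t₀ 1 - Ωhat t₀ 1) * hd1 +
      (Ω t₀ 2 - Ωhat t₀ 2) * hd2
  rw [hval] at key
  exact key
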